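/- Fix integers n ≥ 2 and 1 ≤ d < n. Let 1 ≤ k ≤ n and let v ∈ Λ^k ℝ^{n+1} be a decomposable vector, i.e. v = v_1 ∧ … ∧ v_k for some v_1,…,v_k ∈ ℝ^{n+1}. Then for every 1 ≤ l ≤ d: ‖π_{l+1}(v)‖ · ‖π_0(v)‖ ≤ k · ‖π_l(v)‖ · ‖π_1(v)‖, where π_i is taken to be 0 whenever i lies outside the range max{0, k+d−n} ≤ i ≤ min{d+1, k}. -/

import Mathlib

open Matrix MeasureTheory Filter
open scoped ENNReal NNReal

noncomputable section

/-! ## Exterior powers in coordinates -/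

/-- Index set for the standard wedge basis of Λ^k ℝ^m : k-element subsets of {0,…,m−1}. -/
abbrev Idx (m k : ℕ) := {J : Finset (Fin m) // J.card = k}

/-- Model for the k-th exterior power of ℝ^m, with its sup norm w.r.t. the wedge basis. -/
abbrev Lam (m k : ℕ) := Idx m k → ℝ

/-- Increasing enumeration of a k-element subset of Fin m. -/
def finsetEmb {m k : ℕ} (J : Idx m k) : Fin k → Fin m := fun a => (J.1.orderIsoOfFin J.2 a : Fin m)

/-- Action of an m×m matrix on the k-th exterior power, in the standard wedge basis
(given by the k×k minors). -/
def extPow {m k : ℕ} (g : Matrix (Fin m) (Fin m) ℝ) (v : Lam m k) : Lam m k :=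
  fun J => ∑ K : Idx m k, (g.submatrix (finsetEmb J) (finsetEmb K)).det * v K

/-- The wedge product v₁ ∧ ⋯ ∧ v_k of k vectors in ℝ^m, in coordinates. -/
def wedge {m k : ℕ} (vs : Fin k → (Fin m → ℝ)) : Lam m k :=
  fun J => (Matrix.of fun a b : Fin k => vs b (finsetEmb J a)).det

/-- The wedge product of k integer vectors. -/
def wedgeInt {m k : ℕ} (vs : Fin k → (Fin m → ℤ)) : Lam m k :=
  wedge (fun j i => (vs j i : ℝ))

/-- The projection π_i of Λ^k ℝ^m onto the span of the wedges e_J having exactly i factors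
among e_0,…,e_d (zero if i is out of range). -/
def proj (d : ℕ) {m k : ℕ} (i : ℕ) (v : Lam m k) : Lam m k :=
  fun J => if (J.1.filter (fun x : Fin m => (x : ℕ) ≤ d)).card = i then v J else 0

/-- The projection π₊ of Λ^k ℝ^{d+1} onto the span of the wedges e_J with 0 ∈ J. -/
def projPlus {d k : ℕ} (v : Lam (d+1) k) : Lam (d+1) k :=
  fun J => if (0 : Fin (d+1)) ∈ J.1 then v J else 0

/-- The projection π₋ of Λ^k ℝ^{d+1} onto the span of the wedges e_J with 0 ∉ J. -/
def projMinus {d k : ℕ} (v : Lam (d+1) k) : Lam (d+1) k :=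
  fun J => if (0 : Fin (d+1)) ∉ J.1 then v J else 0

/-! ## The homogeneous space X = SL_{n+1}(ℝ)/SL_{n+1}(ℤ) -/

noncomputable instance SLtop (m : ℕ) : TopologicalSpace (Matrix.SpecialLinearGroup (Fin m) ℝ) :=
  TopologicalSpace.induced (fun g => (g : Matrix (Fin m) (Fin m) ℝ)) inferInstance

abbrev SLn (m : ℕ) := Matrix.SpecialLinearGroup (Fin m) ℝ

/-- Γ = SL_m(ℤ) viewed as a subgroup of SL_m(ℝ). -/
def Gamma (m : ℕ) : Subgroup (SLn m) :=
  (Matrix.SpecialLinearGroup.map (n := Fin m) (Int.castRingHom ℝ)).range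

/-- The space X = SL_m(ℝ)/SL_m(ℤ). -/
abbrev Xsp (m : ℕ) := SLn m ⧸ Gamma m

/-! ## Matrices and one-parameter subgroups -/

lemma det_upperTri {m : ℕ} (M : Matrix (Fin m) (Fin m) ℝ)
    (hoff : ∀ i j : Fin m, (j : ℕ) < (i : ℕ) → M i j = 0)
    (hdiag : ∀ i, M i i = 1) : M.det = 1 := by
  have hbt : M.BlockTriangular id := fun i j hij => hoff i j hij
  rw [Matrix.det_of_upperTriangular hbt]
  simp [hdiag]

/-- u(s): the identity matrix with s₁,…,s_d placed in the first row (columns 1,…,d). -/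
def uMat (n d : ℕ) (s : Fin d → ℝ) : Matrix (Fin (n+1)) (Fin (n+1)) ℝ :=
  Matrix.of fun i j =>
    if i = j then 1
    else if h : i = 0 ∧ 1 ≤ (j : ℕ) ∧ (j : ℕ) ≤ d then s ⟨(j : ℕ) - 1, by omega⟩ else 0

/-- u(s) as an element of SL_{n+1}(ℝ). -/
def uSL (n d : ℕ) (s : Fin d → ℝ) : SLn (n+1) :=
  ⟨uMat n d s, det_upperTri _ (fun i j hij => by
      simp only [uMat, Matrix.of_apply]
      rw [if_neg (by rintro rfl; omega), dif_neg (by rintro ⟨rfl, h1, h2⟩; simp at hij)])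
    (fun i => by simp [uMat])⟩

/-- u(x): the identity matrix with x ∈ ℝ^n placed in the first row. -/
def uxMat (n : ℕ) (x : Fin n → ℝ) : Matrix (Fin (n+1)) (Fin (n+1)) ℝ :=
  Matrix.of fun i j =>
    if i = j then 1
    else if h : i = 0 ∧ 1 ≤ (j : ℕ) then x ⟨(j : ℕ) - 1, by have := j.isLt; omega⟩ else 0

/-- u(x) as an element of SL_{n+1}(ℝ). -/
def uxSL (n : ℕ) (x : Fin n → ℝ) : SLn (n+1) :=
  ⟨uxMat n x, det_upperTri _ (fun i j hij => by
      simp only [uxMat, Matrix.of_apply]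
      rw [if_neg (by rintro rfl; omega), dif_neg (by rintro ⟨rfl, h1⟩; simp at hij)])
    (fun i => by simp [uxMat])⟩

/-- u_A: the block unipotent matrix with I_{d+1}, I_{n−d} on the diagonal and A in the
upper-right block. -/
def uAMat (n d : ℕ) (A : Matrix (Fin (d+1)) (Fin (n-d)) ℝ) : Matrix (Fin (n+1)) (Fin (n+1)) ℝ :=
  Matrix.of fun i j =>
    if i = j then 1
    else if h : (i : ℕ) ≤ d ∧ d + 1 ≤ (j : ℕ) then
      A ⟨(i : ℕ), by omega⟩ ⟨(j : ℕ) - (d+1), by have := j.isLt; omega⟩ else 0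

/-- u_A as an element of SL_{n+1}(ℝ). -/
def uASL (n d : ℕ) (A : Matrix (Fin (d+1)) (Fin (n-d)) ℝ) : SLn (n+1) :=
  ⟨uAMat n d A, det_upperTri _ (fun i j hij => by
      simp only [uAMat, Matrix.of_apply]
      rw [if_neg (by rintro rfl; omega), dif_neg (by rintro ⟨h1, h2⟩; omega)])
    (fun i => by simp [uAMat])⟩

lemma sum_ite_fin (m k : ℕ) (hk : k ≤ m) (a b : ℝ) :
    (∑ i : Fin m, if (i : ℕ) < k then a else b) = k * a + ((m - k : ℕ) : ℝ) * b := by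
  rw [Fin.sum_univ_eq_sum_range (fun i => if i < k then a else b) m]
  rw [Finset.range_eq_Ico, ← Finset.sum_Ico_consecutive _ (Nat.zero_le k) hk]
  rw [Finset.sum_congr rfl (fun i hi => if_pos (Finset.mem_Ico.mp hi).2),
    Finset.sum_congr rfl (g := fun _ => b)
      (fun i hi => if_neg (Nat.not_lt.mpr (Finset.mem_Ico.mp hi).1))]
  simp [Nat.card_Ico, mul_comm]

/-- A diagonal matrix with entries exp (f i), as an element of SL_m(ℝ). -/
def diagSL (m : ℕ) (f : Fin m → ℝ) (h : ∑ i, f i = 0) : SLn m :=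
  ⟨Matrix.diagonal fun i => Real.exp (f i), by
    rw [Matrix.det_diagonal, ← Real.exp_sum, h, Real.exp_zero]⟩

/-- b_t = diag(e^{(n−d)t/((d+1)(n+1))}·I_{d+1}, e^{−t/(n+1)}·I_{n−d}) ∈ SL_{n+1}(ℝ). -/
def btSL (n d : ℕ) (h : d ≤ n) (t : ℝ) : SLn (n+1) :=
  diagSL (n+1)
    (fun i => if (i : ℕ) < d + 1 then ((n : ℝ) - (d : ℝ)) * t / (((d : ℝ) + 1) * ((n : ℝ) + 1))
      else -t / ((n : ℝ) + 1))
    (by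
      rw [sum_ite_fin (n+1) (d+1) (by omega)]
      have h1 : ((n + 1 - (d + 1) : ℕ) : ℝ) = (n : ℝ) - (d : ℝ) := by
        have h2 : (n + 1 - (d + 1) : ℕ) = n - d := by omega
        rw [h2, Nat.cast_sub h]
      rw [h1]
      have hd1 : ((d : ℝ) + 1) ≠ 0 := by positivity
      have hn1 : ((n : ℝ) + 1) ≠ 0 := by positivity
      field_simp
      push_cast
      ring)

/-- c_t = diag(e^{dt/(d+1)}, e^{−t/(d+1)}·I_d, I_{n−d}) ∈ SL_{n+1}(ℝ). -/
def ctSL (n d : ℕ) (h : d ≤ n) (t : ℝ) : SLn (n+1) :=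
  diagSL (n+1)
    (fun i => if (i : ℕ) = 0 then (d : ℝ) * t / ((d : ℝ) + 1)
      else if (i : ℕ) < d + 1 then -t / ((d : ℝ) + 1) else 0)
    (by
      rw [Fin.sum_univ_succ]
      simp only [Fin.val_zero, if_pos rfl, Fin.val_succ]
      have key : ∀ i : Fin n,
          (if (i : ℕ) + 1 = 0 then (d : ℝ) * t / ((d : ℝ) + 1)
            else if (i : ℕ) + 1 < d + 1 then -t / ((d : ℝ) + 1) else 0)
          = (if (i : ℕ) < d then -t / ((d : ℝ) + 1) else 0) := by
        intro i
        rw [if_neg (by omega)]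
        by_cases hc : (i : ℕ) < d
        · rw [if_pos (by omega), if_pos hc]
        · rw [if_neg (by omega), if_neg hc]
      rw [Finset.sum_congr rfl fun i _ => key i, sum_ite_fin n d h]
      have hd1 : ((d : ℝ) + 1) ≠ 0 := by positivity
      field_simp
      rw [if_pos trivial]
      field_simp
      try ring)

/-- g_t = diag(e^{nt/(n+1)}, e^{−t/(n+1)}·I_n) ∈ SL_{n+1}(ℝ). -/
def gtSL (n : ℕ) (t : ℝ) : SLn (n+1) :=
  diagSL (n+1)
    (fun i => if (i : ℕ) = 0 then (n : ℝ) * t / ((n : ℝ) + 1) else -t / ((n : ℝ) + 1))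
    (by
      rw [Fin.sum_univ_succ]
      simp only [Fin.val_zero, if_pos rfl, Fin.val_succ]
      have key : ∀ i : Fin n,
          (if (i : ℕ) + 1 = 0 then (n : ℝ) * t / ((n : ℝ) + 1) else -t / ((n : ℝ) + 1))
          = -t / ((n : ℝ) + 1) := fun i => if_neg (by omega)
      rw [Finset.sum_congr rfl fun i _ => key i, Finset.sum_const, Finset.card_univ,
        Fintype.card_fin, nsmul_eq_mul]
      have hn1 : ((n : ℝ) + 1) ≠ 0 := by positivity
      field_simp
      rw [if_pos trivial]
      field_simp
      try ring)

/-- c_t = diag(e^{dt/(d+1)}, e^{−t/(d+1)}·I_d) as a (d+1)×(d+1) matrix. -/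
def ctMat1 (d : ℕ) (t : ℝ) : Matrix (Fin (d+1)) (Fin (d+1)) ℝ :=
  Matrix.diagonal fun i =>
    if (i : ℕ) = 0 then Real.exp ((d : ℝ) * t / ((d : ℝ) + 1))
    else Real.exp (-t / ((d : ℝ) + 1))

/-- c_t = diag(e^{dt/(d+1)}, e^{−t/(d+1)}·I_d, I_{n−d}) as an (n+1)×(n+1) matrix. -/
def ctMatN (n d : ℕ) (t : ℝ) : Matrix (Fin (n+1)) (Fin (n+1)) ℝ :=
  Matrix.diagonal fun i =>
    if (i : ℕ) = 0 then Real.exp ((d : ℝ) * t / ((d : ℝ) + 1))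
    else if (i : ℕ) < d + 1 then Real.exp (-t / ((d : ℝ) + 1)) else 1

/-- The identification Fin (n+1) ≃ Fin (d+1) ⊕ Fin (n−d). -/
def finSplit (n d : ℕ) (h : d ≤ n) : Fin (n+1) ≃ Fin (d+1) ⊕ Fin (n-d) :=
  (finCongr (by omega)).trans finSumFinEquiv.symm

/-- The embedding SL_{d+1}(ℝ) → SL_{n+1}(ℝ), h ↦ diag(h, I_{n−d}); its image is the
subgroup H of the paper. -/
def embedSL (n d : ℕ) (h : d ≤ n) (g : Matrix.SpecialLinearGroup (Fin (d+1)) ℝ) : SLn (n+1) :=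
  ⟨Matrix.reindex (finSplit n d h).symm (finSplit n d h).symm
      (Matrix.fromBlocks (g : Matrix (Fin (d+1)) (Fin (d+1)) ℝ) 0 0
        (1 : Matrix (Fin (n-d)) (Fin (n-d)) ℝ)), by
    rw [Matrix.det_reindex_self, Matrix.det_fromBlocks_zero₂₁, Matrix.det_one, mul_one]
    exact g.2⟩

/-! ## Height functions and exponents -/

/-- The cube I^d = [−1/2, 1/2]^d. -/
def Icube (d : ℕ) : Set (Fin d → ℝ) := Set.univ.pi fun _ => Set.Icc (-(1/2) : ℝ) (1/2)

/-- The function φ_ε on Λ^k ℝ^{n+1}, with values in [0,∞] (here δ_k = (n+1−k)k). -/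
def phiFn (n d k : ℕ) (ε : ℝ) (v : Lam (n+1) k) : ℝ≥0∞ :=
  if ‖proj d 0 v + proj d (d+1) v‖ < ε ^ ((n + 1 - k) * k) then
    ⨅ i ∈ Finset.Icc 1 d,
      ENNReal.ofReal
          (ε ^ ((((d : ℝ) + 1) / (((d : ℝ) + 1) - (i : ℝ))) * (((n + 1 - k) * k : ℕ) : ℝ)))
        * ENNReal.ofReal ‖proj d i v‖ ^ (-(((d : ℝ) + 1) / (((d : ℝ) + 1) - (i : ℝ))))
  else 0

/-- v ∈ Λ^k ℝ^{n+1} is a y-integral vector: v = g(v₁ ∧ ⋯ ∧ v_k) for a representative g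
of y and linearly independent integer vectors v₁,…,v_k. -/
def IsIntegralVec (n : ℕ) {k : ℕ} (y : Xsp (n+1)) (v : Lam (n+1) k) : Prop :=
  ∃ g : SLn (n+1), (QuotientGroup.mk g : Xsp (n+1)) = y ∧
    ∃ w : Fin k → (Fin (n+1) → ℤ), LinearIndependent ℤ w ∧
      v = extPow (g : Matrix (Fin (n+1)) (Fin (n+1)) ℝ) (wedgeInt w)

/-- The Margulis height function α_ε^θ on X. -/
def alphaF (n d : ℕ) (ε θ : ℝ) (y : Xsp (n+1)) : ℝ≥0∞ :=
  ⨆ k ∈ Finset.Icc 1 n, ⨆ v : Lam (n+1) k, ⨆ _ : v ≠ 0 ∧ IsIntegralVec n y v, phiFn n d k ε v ^ θ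

/-- The dynamical exponent ρ(y; b_t, α) = limsup_{t→∞} log α(b_t y) / t ∈ [−∞,∞]. -/
def rhoExp (n d : ℕ) (h : d ≤ n) (α : Xsp (n+1) → ℝ≥0∞) (y : Xsp (n+1)) : EReal :=
  Filter.limsup (fun t : ℝ => ENNReal.log (α (btSL n d h t • y)) / (t : EReal)) Filter.atTop

/-- α̃_δ(y) = ∫₀^∞ e^{−δt} α(b_t y) dt. -/
def atilde (n d : ℕ) (h : d ≤ n) (δ : ℝ) (α : Xsp (n+1) → ℝ≥0∞) (y : Xsp (n+1)) : ℝ≥0∞ :=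
  ∫⁻ t in Set.Ioi (0 : ℝ), ENNReal.ofReal (Real.exp (-δ * t)) * α (btSL n d h t • y)

/-- α is Lipschitz with respect to the action of H = diag(SL_{d+1}(ℝ), I_{n−d}). -/
def LipschitzWrtH (n d : ℕ) (h : d ≤ n) (α : Xsp (n+1) → ℝ≥0∞) : Prop :=
  ∀ F : Set (SLn (n+1)), F ⊆ Set.range (embedSL n d h) → IsCompact F →
    ∃ C : ℝ, 1 ≤ C ∧ ∀ g ∈ F, ∀ y : Xsp (n+1), α (g • y) ≤ ENNReal.ofReal C * α y

/-- y ∈ X is g_t-divergent on average. -/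
def gDivergentOnAvg (n : ℕ) (y : Xsp (n+1)) : Prop :=
  ∀ K : Set (Xsp (n+1)), IsCompact K →
    Tendsto (fun N : ℕ => ((Set.ncard {l : ℕ | 1 ≤ l ∧ l ≤ N ∧ gtSL n l • y ∈ K} : ℝ) / N))
      atTop (nhds 0)

/-- The set B_x(M,t,m;N) of the paper (for x = y_A and the height function α̃ = α̃_δ). -/
def Bset (n d : ℕ) (h : d ≤ n) (δ : ℝ) (α : Xsp (n+1) → ℝ≥0∞) (yA : Xsp (n+1))
    (M t : ℝ) (m N : ℕ) : Set (Fin d → ℝ) :=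
  {s : Fin d → ℝ | s ∈ Icube d ∧
    atilde n d h δ α ((gtSL n ((m : ℝ) * t) * uSL n d s) • yA) < ENNReal.ofReal M ∧
    ∀ l : ℕ, 1 ≤ l → l ≤ N →
      ENNReal.ofReal M ≤ atilde n d h δ α ((gtSL n (((m : ℝ) + (l : ℝ)) * t) * uSL n d s) • yA)}

/-! ## Diophantine approximation -/

/-- x ∈ ℝ^n is a singular vector. -/
def IsSingular (n : ℕ) (x : Fin n → ℝ) : Prop :=
  ∀ ε : ℝ, 0 < ε → ∃ N₀ : ℝ, ∀ N : ℝ, N₀ ≤ N → ∃ q : Fin n → ℤ, q ≠ 0 ∧ ∃ p : ℤ,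
    |(∑ i, (q i : ℝ) * x i) - (p : ℝ)| ≤ ε * N ^ (-(n : ℝ)) ∧ ‖q‖ ≤ N

/-- The vector (s, s̃A) ∈ ℝ^n, where s̃ = (1, s₁, …, s_d). -/
def xvec (n d : ℕ) (h : d ≤ n) (A : Matrix (Fin (d+1)) (Fin (n-d)) ℝ) (s : Fin d → ℝ) :
    Fin n → ℝ :=
  fun i => Fin.append s (Matrix.vecMul (Fin.cons 1 s) A) (Fin.cast (Nat.add_sub_cancel' h).symm i)

/-- The set of exponents ω for which ‖Aq − p‖ ≤ ‖q‖^{−ω} has infinitely many solutions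
q ∈ ℤ^{n−d} \ {0}, p ∈ ℤ^{d+1}. -/
def diophSet (n d : ℕ) (A : Matrix (Fin (d+1)) (Fin (n-d)) ℝ) : Set ℝ :=
  {ω : ℝ | {qp : (Fin (n-d) → ℤ) × (Fin (d+1) → ℤ) | qp.1 ≠ 0 ∧
    ‖A.mulVec (fun i => (qp.1 i : ℝ)) - (fun i => (qp.2 i : ℝ))‖ ≤ ‖qp.1‖ ^ (-ω)}.Infinite}

/-- The Diophantine exponent ω(A) ∈ [−∞, +∞]. -/
def omegaExp (n d : ℕ) (A : Matrix (Fin (d+1)) (Fin (n-d)) ℝ) : EReal :=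
  sSup (Real.toEReal '' diophSet n d A)

end

/-! ## Auxiliary lemmas for the Plücker inequality -/

section PluckerAux

open Matrix

lemma plucker_id {k : ℕ} (U W : Matrix (Fin k) (Fin k) ℝ) (i₀ : Fin k) :
    U.det * W.det = ∑ j : Fin k, (U.updateRow i₀ (W j)).det * (W.updateRow j (U i₀)).det := by
  have h1 : ∀ j, (U.updateRow i₀ (W j)).det = (Uᵀ.adjugate * Wᵀ) i₀ j := by
    intro j
    rw [← det_transpose, ← updateCol_transpose, ← cramer_apply, cramer_eq_adjugate_mulVec]
    simp [Matrix.mulVec, dotProduct, Matrix.mul_apply, Matrix.transpose_apply]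
  have h2 : ∀ j, (W.updateRow j (U i₀)).det = (Wᵀ.adjugate *ᵥ U i₀) j := by
    intro j
    rw [← det_transpose, ← updateCol_transpose, ← cramer_apply, cramer_eq_adjugate_mulVec]
  simp_rw [h1, h2]
  have h3 : ∑ j, (Uᵀ.adjugate * Wᵀ) i₀ j * (Wᵀ.adjugate *ᵥ U i₀) j
      = ((Uᵀ.adjugate * Wᵀ * Wᵀ.adjugate) *ᵥ U i₀) i₀ := by
    rw [← mulVec_mulVec]; rfl
  rw [h3, Matrix.mul_assoc, mul_adjugate, det_transpose, Matrix.mul_smul, Matrix.mul_one,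
    smul_mulVec, Pi.smul_apply, smul_eq_mul, ← cramer_eq_adjugate_mulVec, cramer_apply]
  have h4 : Uᵀ.updateCol i₀ (U i₀) = Uᵀ := updateCol_eq_self Uᵀ i₀
  rw [h4, det_transpose, mul_comm]

lemma finsetEmb_mem {m k : ℕ} (J : Idx m k) (a : Fin k) : finsetEmb J a ∈ J.1 :=
  (J.1.orderIsoOfFin J.2 a).2

lemma finsetEmb_inj {m k : ℕ} (J : Idx m k) : Function.Injective (finsetEmb J) :=
  fun a b hab => (J.1.orderIsoOfFin J.2).injective (Subtype.ext hab)

lemma finsetEmb_surj {m k : ℕ} (J : Idx m k) {x : Fin m} (hx : x ∈ J.1) :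
    ∃ a, finsetEmb J a = x :=
  ⟨(J.1.orderIsoOfFin J.2).symm ⟨x, hx⟩, by simp [finsetEmb]⟩

lemma image_finsetEmb {m k : ℕ} (J : Idx m k) : Finset.univ.image (finsetEmb J) = J.1 := by
  apply Finset.eq_of_subset_of_card_le
  · intro x hx
    obtain ⟨a, _, rfl⟩ := Finset.mem_image.mp hx
    exact finsetEmb_mem J a
  · rw [Finset.card_image_of_injective _ (finsetEmb_inj J), Finset.card_univ, Fintype.card_fin,
      J.2]

lemma wedge_abs_det {m k : ℕ} (vs : Fin k → (Fin m → ℝ)) (h : Fin k → Fin m)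
    (hinj : Function.Injective h) :
    ∃ J : Idx m k, J.1 = Finset.univ.image h ∧
      |Matrix.det (Matrix.of fun a b : Fin k => vs b (h a))| = |wedge vs J| := by
  refine ⟨⟨Finset.univ.image h, by
    rw [Finset.card_image_of_injective _ hinj, Finset.card_univ, Fintype.card_fin]⟩, rfl, ?_⟩
  set J : Idx m k := ⟨Finset.univ.image h, _⟩
  have hmem : ∀ a, h a ∈ J.1 := fun a => Finset.mem_image.mpr ⟨a, Finset.mem_univ a, rfl⟩
  set σ : Fin k → Fin k := fun a => (J.1.orderIsoOfFin J.2).symm ⟨h a, hmem a⟩ with hσ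
  have hcomm : ∀ a, finsetEmb J (σ a) = h a := by
    intro a
    simp only [finsetEmb, hσ, OrderIso.apply_symm_apply]
  have hσinj : Function.Injective σ := by
    intro a b hab
    apply hinj
    rw [← hcomm a, ← hcomm b, hab]
  let σe : Equiv.Perm (Fin k) := Equiv.ofBijective σ (Finite.injective_iff_bijective.mp hσinj)
  have key : (Matrix.of fun a b : Fin k => vs b (h a))
      = fun a => (Matrix.of fun a b : Fin k => vs b (finsetEmb J a)) (σe a) := by
    funext a b
    simp [Matrix.of_apply, σe, Equiv.ofBijective, hcomm a]
  have key2 : (fun a => (Matrix.of fun a b : Fin k => vs b (finsetEmb J a)) (σe a))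
      = (Matrix.of fun a b : Fin k => vs b (finsetEmb J a)).submatrix σe id := rfl
  rw [key, key2, Matrix.det_permute, wedge]
  rcases Int.units_eq_one_or (Equiv.Perm.sign σe) with hs | hs <;>
    simp [hs, abs_mul]

lemma det_le_proj_norm (d : ℕ) {m k : ℕ} (vs : Fin k → (Fin m → ℝ)) (h : Fin k → Fin m)
    (hinj : Function.Injective h) (i : ℕ)
    (hcard : ((Finset.univ.image h).filter (fun x : Fin m => (x : ℕ) ≤ d)).card = i) :
    |Matrix.det (Matrix.of fun a b : Fin k => vs b (h a))| ≤ ‖proj d i (wedge vs)‖ := by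
  obtain ⟨J₁, hJ₁, heq⟩ := wedge_abs_det vs h hinj
  rw [heq]
  have hco : proj d i (wedge vs) J₁ = wedge vs J₁ := by
    rw [proj, if_pos]
    rw [hJ₁]
    exact hcard
  calc |wedge vs J₁| = ‖proj d i (wedge vs) J₁‖ := by rw [Real.norm_eq_abs, hco]
    _ ≤ ‖proj d i (wedge vs)‖ := norm_le_pi_norm _ J₁

lemma update_bound (d : ℕ) {m k : ℕ} (vs : Fin k → (Fin m → ℝ)) (J : Idx m k) (i₀ : Fin k)
    (x : Fin m) (hx : x ∉ J.1) (i : ℕ)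
    (hcard : ((insert x (J.1.erase (finsetEmb J i₀))).filter
      (fun y : Fin m => (y : ℕ) ≤ d)).card = i) :
    |Matrix.det ((Matrix.of fun a b : Fin k => vs b (finsetEmb J a)).updateRow i₀
      (fun b => vs b x))| ≤ ‖proj d i (wedge vs)‖ := by
  set h : Fin k → Fin m := Function.update (finsetEmb J) i₀ x with hh
  have hmat : (Matrix.of fun a b : Fin k => vs b (finsetEmb J a)).updateRow i₀
      (fun b => vs b x) = Matrix.of fun a b : Fin k => vs b (h a) := by
    ext a b
    rw [Matrix.updateRow_apply]
    simp only [Matrix.of_apply, hh, Function.update_apply]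
    split_ifs <;> rfl
  have hinj : Function.Injective h := by
    intro a b hab
    simp only [hh, Function.update_apply] at hab
    split_ifs at hab with h1 h2 h2
    · rw [h1, h2]
    · exact absurd (hab ▸ finsetEmb_mem J b) hx
    · exact absurd (hab ▸ finsetEmb_mem J a) hx
    · exact finsetEmb_inj J hab
  have himg : Finset.univ.image h = insert x (J.1.erase (finsetEmb J i₀)) := by
    ext y
    simp only [Finset.mem_image, Finset.mem_insert, Finset.mem_erase, Finset.mem_univ,
      true_and, hh, Function.update_apply]
    constructor
    · rintro ⟨a, ha⟩
      by_cases h1 : a = i₀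
      · rw [if_pos h1] at ha; exact Or.inl ha.symm
      · rw [if_neg h1] at ha
        refine Or.inr ⟨?_, ha ▸ finsetEmb_mem J a⟩
        rw [← ha]
        exact fun he => h1 (finsetEmb_inj J he)
    · rintro (rfl | ⟨hne, hmem⟩)
      · exact ⟨i₀, if_pos rfl⟩
      · obtain ⟨a, ha⟩ := finsetEmb_surj J hmem
        refine ⟨a, ?_⟩
        rw [if_neg (fun h1 => hne (by rw [← ha, h1])), ha]
  rw [hmat]
  exact det_le_proj_norm d vs h hinj i (by rw [himg]; exact hcard)

lemma coord_bound (d : ℕ) {m k : ℕ} (l : ℕ) (hl1 : 1 ≤ l)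
    (vs : Fin k → (Fin m → ℝ)) (J J' : Idx m k)
    (hJ : (J.1.filter (fun x : Fin m => (x : ℕ) ≤ d)).card = l + 1)
    (hJ' : (J'.1.filter (fun x : Fin m => (x : ℕ) ≤ d)).card = 0) :
    |wedge vs J| * |wedge vs J'| ≤ (k : ℝ) * (‖proj d l (wedge vs)‖ * ‖proj d 1 (wedge vs)‖) := by
  have hJ'empty : J'.1.filter (fun x : Fin m => (x : ℕ) ≤ d) = ∅ := Finset.card_eq_zero.mp hJ'
  have hJ'none : ∀ y ∈ J'.1, ¬ ((y : ℕ) ≤ d) := by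
    intro y hy hc
    have : y ∈ J'.1.filter (fun x : Fin m => (x : ℕ) ≤ d) := Finset.mem_filter.mpr ⟨hy, hc⟩
    rw [hJ'empty] at this
    exact absurd this (Finset.notMem_empty y)
  obtain ⟨x, hxmem⟩ : (J.1.filter (fun x : Fin m => (x : ℕ) ≤ d)).Nonempty :=
    Finset.card_pos.mp (by rw [hJ]; omega)
  rw [Finset.mem_filter] at hxmem
  obtain ⟨i₀, hi₀⟩ := finsetEmb_surj J hxmem.1
  have hsmall : ((finsetEmb J i₀ : Fin m) : ℕ) ≤ d := by rw [hi₀]; exact hxmem.2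
  set U : Matrix (Fin k) (Fin k) ℝ := Matrix.of fun a b : Fin k => vs b (finsetEmb J a) with hU
  set W : Matrix (Fin k) (Fin k) ℝ := Matrix.of fun a b : Fin k => vs b (finsetEmb J' a) with hW
  have hwJ : wedge vs J = U.det := rfl
  have hwJ' : wedge vs J' = W.det := rfl
  rw [hwJ, hwJ', ← abs_mul, plucker_id U W i₀]
  calc |∑ j : Fin k, (U.updateRow i₀ (W j)).det * (W.updateRow j (U i₀)).det|
      ≤ ∑ j : Fin k, |(U.updateRow i₀ (W j)).det * (W.updateRow j (U i₀)).det| :=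
        Finset.abs_sum_le_sum_abs _ _
    _ ≤ ∑ _j : Fin k, ‖proj d l (wedge vs)‖ * ‖proj d 1 (wedge vs)‖ := by
        apply Finset.sum_le_sum
        intro j _
        rw [abs_mul]
        -- second factor bound, needed in both cases
        have hxJ' : finsetEmb J i₀ ∉ J'.1 := fun hmem' => hJ'none _ hmem' hsmall
        have hb2 : |(W.updateRow j (U i₀)).det| ≤ ‖proj d 1 (wedge vs)‖ := by
          have hUr : U i₀ = fun b => vs b (finsetEmb J i₀) := rfl
          rw [hUr]
          apply update_bound d vs J' j (finsetEmb J i₀) hxJ' 1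
          have h1 : (J'.1.erase (finsetEmb J' j)).filter (fun y : Fin m => (y : ℕ) ≤ d)
              = ∅ := by
            rw [Finset.filter_erase, hJ'empty, Finset.erase_empty]
          rw [Finset.filter_insert, if_pos hsmall, h1]
          simp
        by_cases hmem : finsetEmb J' j ∈ J.1
        · -- repeated row, first determinant vanishes
          obtain ⟨a, ha⟩ := finsetEmb_surj J hmem
          have hane : a ≠ i₀ := by
            intro he
            apply hJ'none _ (finsetEmb_mem J' j)
            rw [← ha, he]
            exact hsmall
          have hz : (U.updateRow i₀ (W j)).det = 0 := by
            apply Matrix.det_zero_of_row_eq hane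
            funext b
            rw [Matrix.updateRow_ne hane, Matrix.updateRow_self]
            show vs b (finsetEmb J a) = W j b
            rw [ha]
            rfl
          rw [hz, abs_zero, zero_mul]
          exact mul_nonneg (norm_nonneg _) (norm_nonneg _)
        · -- main case
          have hb1 : |(U.updateRow i₀ (W j)).det| ≤ ‖proj d l (wedge vs)‖ := by
            have hWr : W j = fun b => vs b (finsetEmb J' j) := rfl
            rw [hWr]
            apply update_bound d vs J i₀ (finsetEmb J' j) hmem l
            rw [Finset.filter_insert, if_neg (hJ'none _ (finsetEmb_mem J' j)),
              Finset.filter_erase, Finset.card_erase_of_mem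
                (Finset.mem_filter.mpr ⟨finsetEmb_mem J i₀, hsmall⟩), hJ]
            omega
          exact mul_le_mul hb1 hb2 (abs_nonneg _) (norm_nonneg _)
    _ = (k : ℝ) * (‖proj d l (wedge vs)‖ * ‖proj d 1 (wedge vs)‖) := by
        rw [Finset.sum_const, Finset.card_univ, Fintype.card_fin, nsmul_eq_mul]

lemma norm_mul_norm_le {ι : Type*} [Fintype ι] (x y : ι → ℝ) (C : ℝ) (hC : 0 ≤ C)
    (h : ∀ i j, |x i| * |y j| ≤ C) : ‖x‖ * ‖y‖ ≤ C := by
  rcases eq_or_lt_of_le (norm_nonneg y) with hy | hy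
  · rw [← hy, mul_zero]; exact hC
  rw [← le_div_iff₀ hy, pi_norm_le_iff_of_nonneg (by positivity)]
  intro i
  rw [Real.norm_eq_abs, le_div_iff₀ hy]
  rcases eq_or_lt_of_le (abs_nonneg (x i)) with hx | hx
  · rw [← hx, zero_mul]; exact hC
  rw [mul_comm, ← le_div_iff₀ hx, pi_norm_le_iff_of_nonneg (by positivity)]
  intro j
  rw [Real.norm_eq_abs, le_div_iff₀ hx, mul_comm]
  exact h i j

end PluckerAux

/-- Plücker-relation inequality for decomposable vectors,
‖π_{l+1}(v)‖·‖π₀(v)‖ ≤ k·‖π_l(v)‖·‖π₁(v)‖. -/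
theorem plucker_inequality
    (n d : ℕ) (hn : 2 ≤ n) (hd : 1 ≤ d) (hdn : d < n)
    (k : ℕ) (hk1 : 1 ≤ k) (hkn : k ≤ n)
    (v : Lam (n+1) k) (hv : ∃ vs : Fin k → (Fin (n+1) → ℝ), v = wedge vs)
    (l : ℕ) (hl1 : 1 ≤ l) (hld : l ≤ d) :
    ‖proj d (l+1) v‖ * ‖proj d 0 v‖ ≤ (k : ℝ) * (‖proj d l v‖ * ‖proj d 1 v‖) := by
  obtain ⟨vs, rfl⟩ := hv
  apply norm_mul_norm_le
  · positivity
  · intro J J'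
    by_cases hJ : (J.1.filter (fun x : Fin (n+1) => (x : ℕ) ≤ d)).card = l + 1
    · by_cases hJ' : (J'.1.filter (fun x : Fin (n+1) => (x : ℕ) ≤ d)).card = 0
      · have h1 : proj d (l+1) (wedge vs) J = wedge vs J := by rw [proj, if_pos hJ]
        have h2 : proj d 0 (wedge vs) J' = wedge vs J' := by rw [proj, if_pos hJ']
        rw [h1, h2]
        exact coord_bound d l hl1 vs J J' hJ hJ'
      · have h2 : proj d 0 (wedge vs) J' = 0 := by rw [proj, if_neg hJ']
        rw [h2, abs_zero, mul_zero]
        positivity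
    · have h1 : proj d (l+1) (wedge vs) J = 0 := by rw [proj, if_neg hJ]
      rw [h1, abs_zero, zero_mul]
      positivity
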